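/- For every real inner product space (V,⟪·,·⟫) and every family of vectors (V_w) indexed by words, and assuming the expectation Gram matrix is positive semidefinite at grade n, the following hold for the endomorphism R_ε := (1/(1+ε))·(id − ε·S) (the leading-order remainder of the integrator generated by f⋆(id;ε) = ½(id − ε·id^{⋆(−1)})): (i) for every ε > 0, ‖(id−E)∘R_ε‖² ≤ ‖(id−E)∘id‖² (the integrator is efficient); (ii) the mean-square excess ‖(id−E)∘id‖² − ‖(id−E)∘R_ε‖², regarded as a function of ε on (0,∞), attains its maximum at ε = 1, i.e. the sinhlog integrator is optimally efficient within this class. -/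

import Mathlib

open Finsupp

/-- Words over the alphabet `A = {0,1,…,d}`. -/
abbrev Word (d : ℕ) : Type := List (Fin (d+1))

/-- The free real vector space with basis the set of all words. -/
abbrev KA (d : ℕ) : Type := Word d →₀ ℝ

/-- Shuffle product of two words, as an element of `KA d`. -/
noncomputable def shuffleWord (d : ℕ) : Word d → Word d → KA d
  | [], v => Finsupp.single v 1
  | a :: u, [] => Finsupp.single (a :: u) 1
  | a :: u, b :: v =>
      Finsupp.mapDomain (List.cons a) (shuffleWord d u (b :: v)) +
      Finsupp.mapDomain (List.cons b) (shuffleWord d (a :: u) v)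
  termination_by u v => u.length + v.length

/-- Bilinear extension of the shuffle product to `KA d`. -/
noncomputable def sh (d : ℕ) (x y : KA d) : KA d :=
  x.sum fun u cu => y.sum fun v cv => (cu * cv) • shuffleWord d u v

/-- Admissible words: concatenations of blocks each of which is the single
letter `0` or a pair `aa` with `a ≠ 0`. -/
inductive Admissible (d : ℕ) : Word d → Prop
  | nil : Admissible d []
  | zero {w : Word d} : Admissible d w → Admissible d (0 :: w)
  | pair {w : Word d} (a : Fin (d+1)) : a ≠ 0 → Admissible d w →
      Admissible d (a :: a :: w)

/-- Number of `0` letters. -/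
def zc (d : ℕ) (w : Word d) : ℕ := w.count 0

/-- Half the number of nonzero letters. -/
def dc (d : ℕ) (w : Word d) : ℕ := (w.length - w.count 0) / 2

def nc (d : ℕ) (w : Word d) : ℕ := zc d w + dc d w

open Classical in
/-- The expectation map on words. -/
noncomputable def Ebar (d : ℕ) (t : ℝ) (w : Word d) : ℝ :=
  if Admissible d w then t ^ nc d w / (2 ^ dc d w * Nat.factorial (nc d w)) else 0

/-- Linear extension of the expectation map to `KA d`. -/
noncomputable def EbarL (d : ℕ) (t : ℝ) (x : KA d) : ℝ :=
  x.sum fun w c => c * Ebar d t w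

/-- The linear endomorphism of `KA d` determined by values on basis words. -/
noncomputable def wordLift (d : ℕ) (f : Word d → KA d) : KA d →ₗ[ℝ] KA d :=
  Finsupp.lsum ℝ fun w => LinearMap.toSpanSingleton ℝ (KA d) (f w)

/-- The identity endomorphism `id`. -/
noncomputable def idE (d : ℕ) : KA d →ₗ[ℝ] KA d := LinearMap.id

/-- The reversal endomorphism `|S|`. -/
noncomputable def revE (d : ℕ) : KA d →ₗ[ℝ] KA d :=
  wordLift d fun w => Finsupp.single w.reverse 1

/-- The antipode `S`. -/
noncomputable def Sa (d : ℕ) : KA d →ₗ[ℝ] KA d :=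
  wordLift d fun w => Finsupp.single w.reverse ((-1 : ℝ) ^ w.length)

/-- The convolution unit `ν`. -/
noncomputable def nuE (d : ℕ) : KA d →ₗ[ℝ] KA d :=
  wordLift d fun w => if w = [] then Finsupp.single ([] : Word d) 1 else 0

/-- The expectation endomorphism `E`. -/
noncomputable def EE (d : ℕ) (t : ℝ) : KA d →ₗ[ℝ] KA d :=
  wordLift d fun w => Finsupp.single ([] : Word d) (Ebar d t w)

/-- The convolution product `X ⋆ Y`. -/
noncomputable def conv (d : ℕ) (X Y : KA d →ₗ[ℝ] KA d) : KA d →ₗ[ℝ] KA d :=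
  wordLift d fun w => ∑ k ∈ Finset.range (w.length + 1),
    sh d (X (Finsupp.single (w.take k) 1)) (Y (Finsupp.single (w.drop k) 1))

/-- Convolution powers, `X^{⋆0} = ν`. -/
noncomputable def convPow (d : ℕ) (X : KA d →ₗ[ℝ] KA d) : ℕ → (KA d →ₗ[ℝ] KA d)
  | 0 => nuE d
  | k + 1 => conv d X (convPow d X k)

/-- The inner product `⟨X,Y⟩` of endomorphisms, taken over the words of
length `n`, relative to the family of vectors `Vf`. -/
noncomputable def ip (d : ℕ) (t : ℝ) {H : Type*} [NormedAddCommGroup H]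
    [InnerProductSpace ℝ H] (Vf : Word d → H) (n : ℕ)
    (X Y : KA d →ₗ[ℝ] KA d) : ℝ :=
  ∑ u : Fin n → Fin (d+1), ∑ v : Fin n → Fin (d+1),
    EbarL d t (sh d (X (Finsupp.single (List.ofFn u) 1))
                    (Y (Finsupp.single (List.ofFn v) 1))) *
      (inner ℝ (Vf (List.ofFn u)) (Vf (List.ofFn v)) : ℝ)

/-- Positive semidefiniteness of the expectation Gram matrix at grade `n`:
indexed by the words of length `n` together with the empty word. -/
def gramPSD (d n : ℕ) (t : ℝ) : Prop :=
  ∀ c : Option (Fin n → Fin (d+1)) → ℝ,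
    0 ≤ ∑ x : Option (Fin n → Fin (d+1)), ∑ y : Option (Fin n → Fin (d+1)),
      c x * c y *
        EbarL d t (shuffleWord d (x.elim ([] : Word d) List.ofFn)
                                 (y.elim ([] : Word d) List.ofFn))

/-- `R_ε = (1/(1+ε))·(id − ε·S)`, the leading-order remainder endomorphism of
the integrator generated by `f⋆(id;ε) = ½(id − ε·id^{⋆(−1)})`. -/
noncomputable def Reps (d : ℕ) (ε : ℝ) : KA d →ₗ[ℝ] KA d :=
  (1 / (1 + ε)) • (idE d - ε • Sa d)

-- basic shuffle lemmas
lemma shuffleWord_nil_left (d : ℕ) (v : Word d) : shuffleWord d [] v = Finsupp.single v 1 := by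
  cases v <;> simp [shuffleWord]

lemma shuffleWord_nil_right (d : ℕ) (u : Word d) : shuffleWord d u [] = Finsupp.single u 1 := by
  cases u <;> simp [shuffleWord]

lemma shuffleWord_cons_cons (d : ℕ) (a b : Fin (d+1)) (u v : Word d) :
    shuffleWord d (a :: u) (b :: v) =
      Finsupp.mapDomain (List.cons a) (shuffleWord d u (b :: v)) +
      Finsupp.mapDomain (List.cons b) (shuffleWord d (a :: u) v) := by
  rw [shuffleWord]

lemma mapDomain_snoc_cons (d : ℕ) (c a : Fin (d+1)) (x : KA d) :
    Finsupp.mapDomain (List.cons c) (Finsupp.mapDomain (· ++ [a]) x) =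
    Finsupp.mapDomain (· ++ [a]) (Finsupp.mapDomain (List.cons c) x) := by
  rw [← Finsupp.mapDomain_comp, ← Finsupp.mapDomain_comp]
  rfl
theorem shuffle_snoc (d : ℕ) (a b : Fin (d+1)) :
    ∀ u v : Word d,
      shuffleWord d (u ++ [a]) (v ++ [b]) =
        Finsupp.mapDomain (· ++ [a]) (shuffleWord d u (v ++ [b])) +
        Finsupp.mapDomain (· ++ [b]) (shuffleWord d (u ++ [a]) v)
  | [], [] => by
      simp only [List.nil_append, shuffleWord_cons_cons, shuffleWord_nil_left,
        shuffleWord_nil_right, Finsupp.mapDomain_single, List.singleton_append]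
      abel
  | [], c :: v => by
      have IH := shuffle_snoc d a b [] v
      simp only [List.nil_append, List.cons_append] at IH ⊢
      rw [shuffleWord_cons_cons, IH]
      simp only [shuffleWord_cons_cons, shuffleWord_nil_left, shuffleWord_nil_right,
        Finsupp.mapDomain_add, Finsupp.mapDomain_single, mapDomain_snoc_cons, List.cons_append, List.singleton_append, List.append_assoc]
      abel
  | c :: u, [] => by
      have IH := shuffle_snoc d a b u []
      simp only [List.nil_append, List.cons_append] at IH ⊢
      rw [shuffleWord_cons_cons, IH]
      simp only [shuffleWord_cons_cons, shuffleWord_nil_left, shuffleWord_nil_right,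
        Finsupp.mapDomain_add, Finsupp.mapDomain_single, mapDomain_snoc_cons, List.cons_append, List.singleton_append, List.append_assoc]
      abel
  | c :: u, e :: v => by
      have IH1 := shuffle_snoc d a b u (e :: v)
      have IH2 := shuffle_snoc d a b (c :: u) v
      simp only [List.nil_append, List.cons_append] at IH1 IH2 ⊢
      rw [shuffleWord_cons_cons, IH1, IH2]
      conv_rhs => rw [shuffleWord_cons_cons, shuffleWord_cons_cons]
      simp only [Finsupp.mapDomain_add, mapDomain_snoc_cons]
      abel
  termination_by u v => u.length + v.length
  decreasing_by all_goals simp +arith [List.length]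
lemma mapDomain_reverse_cons (d : ℕ) (c : Fin (d+1)) (x : KA d) :
    Finsupp.mapDomain List.reverse (Finsupp.mapDomain (List.cons c) x) =
    Finsupp.mapDomain (· ++ [c]) (Finsupp.mapDomain List.reverse x) := by
  rw [← Finsupp.mapDomain_comp, ← Finsupp.mapDomain_comp]
  congr 1
  funext w
  simp [Function.comp]

theorem shuffle_reverse (d : ℕ) :
    ∀ u v : Word d,
      shuffleWord d u.reverse v.reverse = Finsupp.mapDomain List.reverse (shuffleWord d u v)
  | [], v => by
      simp [shuffleWord_nil_left, Finsupp.mapDomain_single]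
  | c :: u, [] => by
      simp [shuffleWord_nil_right, Finsupp.mapDomain_single]
  | c :: u, e :: v => by
      have IH1 := shuffle_reverse d u (e :: v)
      have IH2 := shuffle_reverse d (c :: u) v
      rw [shuffleWord_cons_cons, Finsupp.mapDomain_add, List.reverse_cons, List.reverse_cons,
        shuffle_snoc, ← List.reverse_cons, ← List.reverse_cons, IH1, IH2,
        mapDomain_reverse_cons, mapDomain_reverse_cons]
  termination_by u v => u.length + v.length
lemma sh_single_single (d : ℕ) (u v : Word d) :
    sh d (Finsupp.single u 1) (Finsupp.single v 1) = shuffleWord d u v := by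
  unfold sh
  rw [Finsupp.sum_single_index, Finsupp.sum_single_index]
  · simp
  · simp
  · rw [Finsupp.sum_single_index] <;> simp

lemma sh_add_left (d : ℕ) (x x' y : KA d) : sh d (x + x') y = sh d x y + sh d x' y := by
  unfold sh
  rw [Finsupp.sum_add_index']
  · intro u; simp
  · intro u c1 c2
    rw [← Finsupp.sum_add]
    congr 1; funext v cv
    rw [add_mul, add_smul]

lemma sh_smul_left (d : ℕ) (r : ℝ) (x y : KA d) : sh d (r • x) y = r • sh d x y := by
  unfold sh
  rw [Finsupp.sum_smul_index (by intro u; simp), Finsupp.smul_sum]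
  congr 1; funext u cu
  rw [Finsupp.smul_sum]
  congr 1; funext v cv
  rw [mul_assoc, mul_smul]

lemma sh_add_right (d : ℕ) (x y y' : KA d) : sh d x (y + y') = sh d x y + sh d x y' := by
  unfold sh
  rw [← Finsupp.sum_add]
  congr 1; funext u cu
  rw [Finsupp.sum_add_index']
  · intro v; simp
  · intro v c1 c2; rw [mul_add, add_smul]

lemma sh_smul_right (d : ℕ) (r : ℝ) (x y : KA d) : sh d x (r • y) = r • sh d x y := by
  unfold sh
  rw [Finsupp.smul_sum]
  congr 1; funext u cu
  rw [Finsupp.sum_smul_index (by intro v; simp), Finsupp.smul_sum]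
  congr 1; funext v cv
  rw [mul_left_comm, mul_smul]

/-- The shuffle product as a bilinear map. -/
noncomputable def shL (d : ℕ) : KA d →ₗ[ℝ] KA d →ₗ[ℝ] KA d :=
  LinearMap.mk₂ ℝ (sh d) (sh_add_left d) (sh_smul_left d) (sh_add_right d) (sh_smul_right d)

lemma shL_apply (d : ℕ) (x y : KA d) : shL d x y = sh d x y := rfl

/-- The expectation functional as a linear map. -/
noncomputable def EbarLL (d : ℕ) (t : ℝ) : KA d →ₗ[ℝ] ℝ :=
  Finsupp.linearCombination ℝ (Ebar d t)

lemma EbarL_eq (d : ℕ) (t : ℝ) (x : KA d) : EbarL d t x = EbarLL d t x := by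
  unfold EbarL EbarLL
  rw [Finsupp.linearCombination_apply]
  rfl

lemma EbarL_single (d : ℕ) (t : ℝ) (w : Word d) (c : ℝ) :
    EbarL d t (Finsupp.single w c) = c * Ebar d t w := by
  rw [EbarL_eq]; unfold EbarLL
  simp [Finsupp.linearCombination_single]
lemma Admissible.append {d : ℕ} {u v : Word d} (hu : Admissible d u) (hv : Admissible d v) :
    Admissible d (u ++ v) := by
  induction hu with
  | nil => simpa
  | zero _ ih => exact Admissible.zero ih
  | pair a ha _ ih => exact Admissible.pair a ha ih

lemma Admissible.reverse {d : ℕ} {u : Word d} (hu : Admissible d u) :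
    Admissible d u.reverse := by
  induction hu with
  | nil => simpa using Admissible.nil
  | zero _ ih =>
      rw [List.reverse_cons]
      exact ih.append (Admissible.zero Admissible.nil)
  | pair a ha _ ih =>
      rw [List.reverse_cons, List.reverse_cons, List.append_assoc]
      exact ih.append (Admissible.pair a ha Admissible.nil)

lemma admissible_reverse_iff (d : ℕ) (w : Word d) :
    Admissible d w.reverse ↔ Admissible d w := by
  constructor
  · intro h; simpa using h.reverse
  · exact Admissible.reverse

lemma Ebar_reverse (d : ℕ) (t : ℝ) (w : Word d) : Ebar d t w.reverse = Ebar d t w := by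
  unfold Ebar
  rw [admissible_reverse_iff]
  have hz : zc d w.reverse = zc d w := by simp [zc, List.count_reverse]
  have hd : dc d w.reverse = dc d w := by simp [dc, List.count_reverse]
  rw [show nc d w.reverse = nc d w by rw [nc, nc, hz, hd], hd]

lemma Ebar_nil (d : ℕ) (t : ℝ) : Ebar d t ([] : Word d) = 1 := by
  rw [Ebar, if_pos Admissible.nil]
  simp [nc, zc, dc]

lemma EbarL_mapDomain_reverse (d : ℕ) (t : ℝ) (x : KA d) :
    EbarL d t (Finsupp.mapDomain List.reverse x) = EbarL d t x := by
  unfold EbarL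
  rw [Finsupp.sum_mapDomain_index (by intro w; simp) (by intro w c1 c2; rw [add_mul])]
  congr 1; funext w c
  rw [Ebar_reverse]

lemma EbarL_shuffle_reverse (d : ℕ) (t : ℝ) (u v : Word d) :
    EbarL d t (shuffleWord d u.reverse v.reverse) = EbarL d t (shuffleWord d u v) := by
  rw [shuffle_reverse, EbarL_mapDomain_reverse]
lemma wordLift_single (d : ℕ) (f : Word d → KA d) (w : Word d) :
    wordLift d f (Finsupp.single w 1) = f w := by
  unfold wordLift
  rw [Finsupp.lsum_single, LinearMap.toSpanSingleton_apply, one_smul]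

/-- `τ w = w − Ē(w)·𝟏`. -/
noncomputable def tau (d : ℕ) (t : ℝ) (w : Word d) : KA d :=
  Finsupp.single w 1 - Ebar d t w • Finsupp.single ([] : Word d) 1

lemma T_single (d : ℕ) (t : ℝ) (w : Word d) :
    (idE d - EE d t) (Finsupp.single w 1) = tau d t w := by
  rw [LinearMap.sub_apply, idE, LinearMap.id_apply, EE, wordLift_single, tau]
  congr 1
  rw [Finsupp.smul_single, smul_eq_mul, mul_one]

lemma Sa_single (d : ℕ) (w : Word d) :
    Sa d (Finsupp.single w 1) = ((-1 : ℝ) ^ w.length) • Finsupp.single w.reverse 1 := by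
  rw [Sa, wordLift_single, Finsupp.smul_single, smul_eq_mul, mul_one]

lemma TS_single (d : ℕ) (t : ℝ) (w : Word d) :
    ((idE d - EE d t) ∘ₗ Sa d) (Finsupp.single w 1)
      = ((-1 : ℝ) ^ w.length) • tau d t w.reverse := by
  rw [LinearMap.comp_apply, Sa_single, map_smul, T_single]

lemma TReps_single (d : ℕ) (t ε : ℝ) (w : Word d) :
    ((idE d - EE d t) ∘ₗ Reps d ε) (Finsupp.single w 1)
      = (1/(1+ε)) • (tau d t w + (-(ε * (-1 : ℝ) ^ w.length)) • tau d t w.reverse) := by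
  have h1 : (idE d - ε • Sa d) (Finsupp.single w 1)
      = Finsupp.single w 1 - (ε * (-1 : ℝ) ^ w.length) • Finsupp.single w.reverse 1 := by
    rw [LinearMap.sub_apply, LinearMap.smul_apply, Sa_single, smul_smul]
    rfl
  rw [LinearMap.comp_apply, Reps, LinearMap.smul_apply, map_smul, h1, map_sub, map_smul,
    T_single]
  have h2 : (idE d - EE d t) (Finsupp.single w.reverse 1) = tau d t w.reverse := T_single d t _
  rw [h2, neg_smul, sub_eq_add_neg]

lemma Tid_single (d : ℕ) (t : ℝ) (w : Word d) :
    ((idE d - EE d t) ∘ₗ idE d) (Finsupp.single w 1) = tau d t w := by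
  rw [LinearMap.comp_apply]
  have : idE d (Finsupp.single w 1) = Finsupp.single w 1 := rfl
  rw [this, T_single]
/-- `e2 p q = Ē(p ⧢ q)`. -/
noncomputable def e2 (d : ℕ) (t : ℝ) (p q : KA d) : ℝ := EbarL d t (sh d p q)

lemma e2_bilin (d : ℕ) (t : ℝ) (c1 c2 : ℝ) (p p' q q' : KA d) :
    e2 d t (p + c1 • p') (q + c2 • q')
      = e2 d t p q + c2 * e2 d t p q' + c1 * e2 d t p' q + (c1 * c2) * e2 d t p' q' := by
  unfold e2
  simp only [← shL_apply, map_add, map_smul, LinearMap.add_apply, LinearMap.smul_apply,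
    EbarL_eq, smul_eq_mul]
  ring

lemma e2_smul_both (d : ℕ) (t : ℝ) (r : ℝ) (p q : KA d) :
    e2 d t (r • p) (r • q) = r^2 * e2 d t p q := by
  unfold e2
  rw [sh_smul_left, sh_smul_right, EbarL_eq, map_smul, map_smul, EbarL_eq, smul_eq_mul,
    smul_eq_mul]
  ring

lemma e2_single_single (d : ℕ) (t : ℝ) (u v : Word d) :
    e2 d t (Finsupp.single u 1) (Finsupp.single v 1) = EbarL d t (shuffleWord d u v) := by
  rw [e2, sh_single_single]

lemma tau_eq (d : ℕ) (t : ℝ) (w : Word d) :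
    tau d t w = Finsupp.single w 1 + (-(Ebar d t w)) • Finsupp.single ([] : Word d) 1 := by
  rw [tau, neg_smul, sub_eq_add_neg]

lemma e2_tau (d : ℕ) (t : ℝ) (w w' : Word d) :
    e2 d t (tau d t w) (tau d t w')
      = EbarL d t (shuffleWord d w w') - Ebar d t w * Ebar d t w' := by
  rw [tau_eq, tau_eq, e2_bilin]
  rw [e2_single_single, e2_single_single, e2_single_single, e2_single_single,
    shuffleWord_nil_right, shuffleWord_nil_left, shuffleWord_nil_left,
    EbarL_single, EbarL_single, EbarL_single, one_mul, one_mul, one_mul, Ebar_nil]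
  ring

lemma e2_tau_reverse (d : ℕ) (t : ℝ) (w w' : Word d) :
    e2 d t (tau d t w.reverse) (tau d t w'.reverse) = e2 d t (tau d t w) (tau d t w') := by
  rw [e2_tau, e2_tau, EbarL_shuffle_reverse, Ebar_reverse, Ebar_reverse]
lemma ofFn_reverse {α : Type*} {n : ℕ} (f : Fin n → α) :
    (List.ofFn f).reverse = List.ofFn (fun i => f (Fin.rev i)) := by
  apply List.ext_getElem
  · simp
  · intro i h1 h2
    simp only [List.getElem_reverse, List.getElem_ofFn]
    congr 1
    ext
    simp only [Fin.rev]
    simp only [List.length_reverse, List.length_ofFn] at h1 h2 ⊢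
    omega

/-- Words indexed by `Option`: `none ↦ 𝟏`, `some u ↦ u`. -/
def wd (d n : ℕ) (x : Option (Fin n → Fin (d+1))) : Word d := x.elim [] List.ofFn

/-- Coefficients of `τ(w) + (−1)ⁿ τ(w.reverse)` in the basis of grade-`n` words
together with the empty word. -/
noncomputable def Nco (d n : ℕ) (t : ℝ) (x : Option (Fin n → Fin (d+1)))
    (u : Fin n → Fin (d+1)) : ℝ :=
  x.elim (-(Ebar d t (List.ofFn u) + (-1:ℝ)^n * Ebar d t (List.ofFn u).reverse))
    (fun x' => (if x' = u then (1:ℝ) else 0)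
      + (-1:ℝ)^n * (if x' = (fun i => u (Fin.rev i)) then 1 else 0))

lemma Phi_decomp (d n : ℕ) (t : ℝ) (u : Fin n → Fin (d+1)) :
    tau d t (List.ofFn u) + ((-1:ℝ)^n) • tau d t (List.ofFn u).reverse
      = ∑ x : Option (Fin n → Fin (d+1)),
          Nco d n t x u • Finsupp.single (wd d n x) 1 := by
  rw [Fintype.sum_option]
  have h1 : (∑ x' : Fin n → Fin (d+1),
        Nco d n t (some x') u • Finsupp.single (wd d n (some x')) (1:ℝ))
      = Finsupp.single (List.ofFn u) 1
          + ((-1:ℝ)^n) • Finsupp.single (List.ofFn u).reverse 1 := by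
    simp only [Nco, wd, Option.elim, add_smul, mul_ite, mul_one, mul_zero, ite_smul, zero_smul, one_smul]
    rw [Finset.sum_add_distrib, Finset.sum_ite_eq' Finset.univ u
        (fun x' => Finsupp.single (List.ofFn x') (1:ℝ)),
      Finset.sum_ite_eq' Finset.univ (fun i => u (Fin.rev i))
        (fun x' => ((-1:ℝ)^n) • Finsupp.single (List.ofFn x') (1:ℝ))]
    simp [ofFn_reverse]
  rw [h1]
  simp only [Nco, wd, Option.elim, tau]
  rw [smul_sub, smul_smul]
  simp only [add_smul, neg_smul]
  abel
lemma e2_eq (d : ℕ) (t : ℝ) (p q : KA d) : e2 d t p q = EbarLL d t (shL d p q) := by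
  rw [e2, EbarL_eq, shL_apply]

lemma e2_sum_sum (d : ℕ) (t : ℝ) {ι : Type*} [Fintype ι] (f g : ι → ℝ) (p q : ι → KA d) :
    e2 d t (∑ x, f x • p x) (∑ y, g y • q y)
      = ∑ x, ∑ y, f x * g y * e2 d t (p x) (q y) := by
  rw [e2_eq]
  simp only [map_sum, map_smul, LinearMap.coe_sum, Finset.sum_apply, LinearMap.smul_apply,
    smul_eq_mul, Finset.mul_sum]
  rw [Finset.sum_comm]
  refine Finset.sum_congr rfl fun x _ => Finset.sum_congr rfl fun y _ => ?_
  rw [e2_eq]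
  ring

lemma Q_nonneg (d n : ℕ) (t : ℝ) {H : Type*} [NormedAddCommGroup H]
    [InnerProductSpace ℝ H] (Vf : Word d → H) (hPSD : gramPSD d n t) :
    0 ≤ ∑ u : Fin n → Fin (d+1), ∑ v : Fin n → Fin (d+1),
      e2 d t (tau d t (List.ofFn u) + ((-1:ℝ)^n) • tau d t (List.ofFn u).reverse)
             (tau d t (List.ofFn v) + ((-1:ℝ)^n) • tau d t (List.ofFn v).reverse) *
        (inner ℝ (Vf (List.ofFn u)) (Vf (List.ofFn v)) : ℝ) := by
  classical
  set J := Fin n → Fin (d+1)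
  set C : Option J → Option J → ℝ := fun x y =>
    EbarL d t (shuffleWord d (wd d n x) (wd d n y)) with hC
  set W : Option J → H := fun x => ∑ u : J, Nco d n t x u • Vf (List.ofFn u) with hW
  -- step 1: rewrite the double sum
  have key : (∑ u : J, ∑ v : J,
      e2 d t (tau d t (List.ofFn u) + ((-1:ℝ)^n) • tau d t (List.ofFn u).reverse)
             (tau d t (List.ofFn v) + ((-1:ℝ)^n) • tau d t (List.ofFn v).reverse) *
        (inner ℝ (Vf (List.ofFn u)) (Vf (List.ofFn v)) : ℝ))
      = ∑ x : Option J, ∑ y : Option J, C x y * (inner ℝ (W x) (W y) : ℝ) := by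
    have h1 : ∀ u v : J,
        e2 d t (tau d t (List.ofFn u) + ((-1:ℝ)^n) • tau d t (List.ofFn u).reverse)
               (tau d t (List.ofFn v) + ((-1:ℝ)^n) • tau d t (List.ofFn v).reverse)
          = ∑ x : Option J, ∑ y : Option J, Nco d n t x u * Nco d n t y v * C x y := by
      intro u v
      rw [Phi_decomp d n t u, Phi_decomp d n t v, e2_sum_sum]
      refine Finset.sum_congr rfl fun x _ => Finset.sum_congr rfl fun y _ => ?_
      rw [e2_single_single]
    calc (∑ u : J, ∑ v : J,
        e2 d t (tau d t (List.ofFn u) + ((-1:ℝ)^n) • tau d t (List.ofFn u).reverse)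
               (tau d t (List.ofFn v) + ((-1:ℝ)^n) • tau d t (List.ofFn v).reverse) *
          (inner ℝ (Vf (List.ofFn u)) (Vf (List.ofFn v)) : ℝ))
        = ∑ u : J, ∑ v : J, ∑ x : Option J, ∑ y : Option J,
            Nco d n t x u * Nco d n t y v * C x y *
              (inner ℝ (Vf (List.ofFn u)) (Vf (List.ofFn v)) : ℝ) := by
          refine Finset.sum_congr rfl fun u _ => Finset.sum_congr rfl fun v _ => ?_
          rw [h1]
          simp only [Finset.sum_mul]
      _ = ∑ u : J, ∑ x : Option J, ∑ v : J, ∑ y : Option J,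
            Nco d n t x u * Nco d n t y v * C x y *
              (inner ℝ (Vf (List.ofFn u)) (Vf (List.ofFn v)) : ℝ) :=
          Finset.sum_congr rfl fun u _ => Finset.sum_comm
      _ = ∑ x : Option J, ∑ u : J, ∑ v : J, ∑ y : Option J,
            Nco d n t x u * Nco d n t y v * C x y *
              (inner ℝ (Vf (List.ofFn u)) (Vf (List.ofFn v)) : ℝ) :=
          Finset.sum_comm
      _ = ∑ x : Option J, ∑ u : J, ∑ y : Option J, ∑ v : J,
            Nco d n t x u * Nco d n t y v * C x y *
              (inner ℝ (Vf (List.ofFn u)) (Vf (List.ofFn v)) : ℝ) :=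
          Finset.sum_congr rfl fun x _ => Finset.sum_congr rfl fun u _ => Finset.sum_comm
      _ = ∑ x : Option J, ∑ y : Option J, ∑ u : J, ∑ v : J,
            Nco d n t x u * Nco d n t y v * C x y *
              (inner ℝ (Vf (List.ofFn u)) (Vf (List.ofFn v)) : ℝ) :=
          Finset.sum_congr rfl fun x _ => Finset.sum_comm
      _ = ∑ x : Option J, ∑ y : Option J, C x y * (inner ℝ (W x) (W y) : ℝ) := by
          refine Finset.sum_congr rfl fun x _ => Finset.sum_congr rfl fun y _ => ?_
          rw [hW]
          rw [sum_inner]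
          rw [Finset.mul_sum]
          refine Finset.sum_congr rfl fun u _ => ?_
          rw [inner_sum, Finset.mul_sum]
          refine Finset.sum_congr rfl fun v _ => ?_
          rw [real_inner_smul_left, real_inner_smul_right]
          ring
  rw [key]
  -- step 2: positivity via an orthonormal basis of the span of the `W x`
  have hfin : FiniteDimensional ℝ (Submodule.span ℝ (Set.range W)) :=
    FiniteDimensional.span_of_finite ℝ (Set.finite_range W)
  set F := Submodule.span ℝ (Set.range W)
  let b := stdOrthonormalBasis ℝ F
  let W' : Option J → F := fun x => ⟨W x, Submodule.subset_span (Set.mem_range_self x)⟩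
  have hinner : ∀ x y : Option J, (inner ℝ (W x) (W y) : ℝ)
      = ∑ k, (inner ℝ (W' x) (b k) : ℝ) * (inner ℝ (b k) (W' y) : ℝ) := by
    intro x y
    rw [b.sum_inner_mul_inner]
    rfl
  have : (∑ x : Option J, ∑ y : Option J, C x y * (inner ℝ (W x) (W y) : ℝ))
      = ∑ k, ∑ x : Option J, ∑ y : Option J,
          (inner ℝ (W' x) (b k) : ℝ) * (inner ℝ (W' y) (b k) : ℝ) * C x y := by
    calc (∑ x : Option J, ∑ y : Option J, C x y * (inner ℝ (W x) (W y) : ℝ))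
        = ∑ x : Option J, ∑ y : Option J, ∑ k,
            (inner ℝ (W' x) (b k) : ℝ) * (inner ℝ (W' y) (b k) : ℝ) * C x y := by
          refine Finset.sum_congr rfl fun x _ => Finset.sum_congr rfl fun y _ => ?_
          rw [hinner, Finset.mul_sum]
          refine Finset.sum_congr rfl fun k _ => ?_
          rw [real_inner_comm (b k) (W' y)]
          ring
      _ = ∑ x : Option J, ∑ k, ∑ y : Option J,
            (inner ℝ (W' x) (b k) : ℝ) * (inner ℝ (W' y) (b k) : ℝ) * C x y :=
          Finset.sum_congr rfl fun x _ => Finset.sum_comm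
      _ = _ := Finset.sum_comm
  rw [this]
  refine Finset.sum_nonneg fun k _ => ?_
  exact hPSD (fun x => (inner ℝ (W' x) (b k) : ℝ))
noncomputable def Sab (d n : ℕ) (t : ℝ) {H : Type*} [NormedAddCommGroup H]
    [InnerProductSpace ℝ H] (Vf : Word d → H)
    (f g : (Fin n → Fin (d+1)) → KA d) : ℝ :=
  ∑ u : Fin n → Fin (d+1), ∑ v : Fin n → Fin (d+1),
    e2 d t (f u) (g v) * (inner ℝ (Vf (List.ofFn u)) (Vf (List.ofFn v)) : ℝ)

noncomputable def AA (d n : ℕ) (t : ℝ) (u : Fin n → Fin (d+1)) : KA d :=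
  tau d t (List.ofFn u)

noncomputable def BB (d n : ℕ) (t : ℝ) (u : Fin n → Fin (d+1)) : KA d :=
  tau d t (List.ofFn u).reverse

section Final

variable (d n : ℕ) (t : ℝ) {H : Type*} [NormedAddCommGroup H] [InnerProductSpace ℝ H]
  (Vf : Word d → H)

lemma ip_eq_sum (X Y : KA d →ₗ[ℝ] KA d) :
    ip d t Vf n X Y = ∑ u : Fin n → Fin (d+1), ∑ v : Fin n → Fin (d+1),
      e2 d t (X (Finsupp.single (List.ofFn u) 1)) (Y (Finsupp.single (List.ofFn v) 1)) *
        (inner ℝ (Vf (List.ofFn u)) (Vf (List.ofFn v)) : ℝ) := rfl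

lemma ip_Tid :
    ip d t Vf n ((idE d - EE d t) ∘ₗ idE d) ((idE d - EE d t) ∘ₗ idE d)
      = Sab d n t Vf (AA d n t) (AA d n t) := by
  rw [ip_eq_sum, Sab]
  refine Finset.sum_congr rfl fun u _ => Finset.sum_congr rfl fun v _ => ?_
  rw [Tid_single, Tid_single]
  rfl

lemma cS_eq_aS : Sab d n t Vf (BB d n t) (BB d n t) = Sab d n t Vf (AA d n t) (AA d n t) := by
  rw [Sab, Sab]
  refine Finset.sum_congr rfl fun u _ => Finset.sum_congr rfl fun v _ => ?_
  rw [BB, BB, AA, AA, e2_tau_reverse]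

lemma ip_TReps (ε : ℝ) :
    ip d t Vf n ((idE d - EE d t) ∘ₗ Reps d ε) ((idE d - EE d t) ∘ₗ Reps d ε)
      = (1/(1+ε))^2 * (Sab d n t Vf (AA d n t) (AA d n t)
          + (-(ε * (-1:ℝ)^n)) * Sab d n t Vf (AA d n t) (BB d n t)
          + (-(ε * (-1:ℝ)^n)) * Sab d n t Vf (BB d n t) (AA d n t)
          + (-(ε * (-1:ℝ)^n))^2 * Sab d n t Vf (BB d n t) (BB d n t)) := by
  rw [ip_eq_sum]
  have hX : ∀ u : Fin n → Fin (d+1),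
      ((idE d - EE d t) ∘ₗ Reps d ε) (Finsupp.single (List.ofFn u) 1)
        = (1/(1+ε)) • (AA d n t u + (-(ε * (-1:ℝ)^n)) • BB d n t u) := by
    intro u
    rw [TReps_single, List.length_ofFn, AA, BB]
  have step1 : ∀ u v : Fin n → Fin (d+1),
      e2 d t (((idE d - EE d t) ∘ₗ Reps d ε) (Finsupp.single (List.ofFn u) 1))
             (((idE d - EE d t) ∘ₗ Reps d ε) (Finsupp.single (List.ofFn v) 1))
        = (1/(1+ε))^2 * (e2 d t (AA d n t u) (AA d n t v)
            + (-(ε * (-1:ℝ)^n)) * e2 d t (AA d n t u) (BB d n t v)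
            + (-(ε * (-1:ℝ)^n)) * e2 d t (BB d n t u) (AA d n t v)
            + (-(ε * (-1:ℝ)^n))^2 * e2 d t (BB d n t u) (BB d n t v)) := by
    intro u v
    rw [hX, hX, e2_smul_both, e2_bilin]
    ring
  calc (∑ u : Fin n → Fin (d+1), ∑ v : Fin n → Fin (d+1),
      e2 d t (((idE d - EE d t) ∘ₗ Reps d ε) (Finsupp.single (List.ofFn u) 1))
             (((idE d - EE d t) ∘ₗ Reps d ε) (Finsupp.single (List.ofFn v) 1)) *
        (inner ℝ (Vf (List.ofFn u)) (Vf (List.ofFn v)) : ℝ))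
      = ∑ u : Fin n → Fin (d+1), ∑ v : Fin n → Fin (d+1),
          ((1/(1+ε))^2 * (e2 d t (AA d n t u) (AA d n t v) *
              (inner ℝ (Vf (List.ofFn u)) (Vf (List.ofFn v)) : ℝ))
            + ((1/(1+ε))^2 * (-(ε * (-1:ℝ)^n))) * (e2 d t (AA d n t u) (BB d n t v) *
              (inner ℝ (Vf (List.ofFn u)) (Vf (List.ofFn v)) : ℝ))
            + ((1/(1+ε))^2 * (-(ε * (-1:ℝ)^n))) * (e2 d t (BB d n t u) (AA d n t v) *
              (inner ℝ (Vf (List.ofFn u)) (Vf (List.ofFn v)) : ℝ))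
            + ((1/(1+ε))^2 * (-(ε * (-1:ℝ)^n))^2) * (e2 d t (BB d n t u) (BB d n t v) *
              (inner ℝ (Vf (List.ofFn u)) (Vf (List.ofFn v)) : ℝ))) := by
        refine Finset.sum_congr rfl fun u _ => Finset.sum_congr rfl fun v _ => ?_
        rw [step1]
        ring
    _ = _ := by
        simp only [Finset.sum_add_distrib, ← Finset.mul_sum]
        rw [Sab, Sab, Sab, Sab]
        ring

lemma Q_nonneg' (hPSD : gramPSD d n t) :
    0 ≤ Sab d n t Vf (AA d n t) (AA d n t)
        + ((-1:ℝ)^n) * Sab d n t Vf (AA d n t) (BB d n t)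
        + ((-1:ℝ)^n) * Sab d n t Vf (BB d n t) (AA d n t)
        + Sab d n t Vf (BB d n t) (BB d n t) := by
  have h := Q_nonneg d n t Vf hPSD
  have hq2 : ((-1:ℝ)^n) * ((-1:ℝ)^n) = 1 := by
    rw [← pow_add, show n + n = 2 * n from by ring, pow_mul]
    norm_num
  calc (0:ℝ) ≤ ∑ u : Fin n → Fin (d+1), ∑ v : Fin n → Fin (d+1),
      e2 d t (tau d t (List.ofFn u) + ((-1:ℝ)^n) • tau d t (List.ofFn u).reverse)
             (tau d t (List.ofFn v) + ((-1:ℝ)^n) • tau d t (List.ofFn v).reverse) *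
        (inner ℝ (Vf (List.ofFn u)) (Vf (List.ofFn v)) : ℝ) := h
    _ = ∑ u : Fin n → Fin (d+1), ∑ v : Fin n → Fin (d+1),
          (e2 d t (AA d n t u) (AA d n t v) *
              (inner ℝ (Vf (List.ofFn u)) (Vf (List.ofFn v)) : ℝ)
            + ((-1:ℝ)^n) * (e2 d t (AA d n t u) (BB d n t v) *
              (inner ℝ (Vf (List.ofFn u)) (Vf (List.ofFn v)) : ℝ))
            + ((-1:ℝ)^n) * (e2 d t (BB d n t u) (AA d n t v) *
              (inner ℝ (Vf (List.ofFn u)) (Vf (List.ofFn v)) : ℝ))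
            + (e2 d t (BB d n t u) (BB d n t v) *
              (inner ℝ (Vf (List.ofFn u)) (Vf (List.ofFn v)) : ℝ))) := by
        refine Finset.sum_congr rfl fun u _ => Finset.sum_congr rfl fun v _ => ?_
        rw [e2_bilin, AA, AA, BB, BB]
        rw [hq2]
        ring
    _ = _ := by
        simp only [Finset.sum_add_distrib, ← Finset.mul_sum]
        rw [Sab, Sab, Sab, Sab]

end Final

theorem stmt_0 (d n : ℕ) (hd : 1 ≤ d) (hn : 1 ≤ n) (t : ℝ) (ht : 0 < t)
    {H : Type*} [NormedAddCommGroup H] [InnerProductSpace ℝ H]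
    (Vf : Word d → H) (hPSD : gramPSD d n t) :
    (∀ ε : ℝ, 0 < ε →
      ip d t Vf n ((idE d - EE d t) ∘ₗ Reps d ε) ((idE d - EE d t) ∘ₗ Reps d ε)
        ≤ ip d t Vf n ((idE d - EE d t) ∘ₗ idE d) ((idE d - EE d t) ∘ₗ idE d)) ∧
    (∀ ε : ℝ, 0 < ε →
      ip d t Vf n ((idE d - EE d t) ∘ₗ idE d) ((idE d - EE d t) ∘ₗ idE d)
          - ip d t Vf n ((idE d - EE d t) ∘ₗ Reps d ε) ((idE d - EE d t) ∘ₗ Reps d ε)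
        ≤ ip d t Vf n ((idE d - EE d t) ∘ₗ idE d) ((idE d - EE d t) ∘ₗ idE d)
          - ip d t Vf n ((idE d - EE d t) ∘ₗ Reps d 1) ((idE d - EE d t) ∘ₗ Reps d 1)) := by
  have hq2 : ((-1:ℝ)^n) * ((-1:ℝ)^n) = 1 := by
    rw [← pow_add, show n + n = 2 * n from by ring, pow_mul]
    norm_num
  set q : ℝ := (-1:ℝ)^n with hqdef
  set a := Sab d n t Vf (AA d n t) (AA d n t) with ha
  set s1 := Sab d n t Vf (AA d n t) (BB d n t) with hs1
  set s2 := Sab d n t Vf (BB d n t) (AA d n t) with hs2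
  set c := Sab d n t Vf (BB d n t) (BB d n t) with hcdef
  have hc : c = a := cS_eq_aS d n t Vf
  have hQ : 0 ≤ 2*a + q*(s1+s2) := by
    have h := Q_nonneg' d n t Vf hPSD
    rw [← ha, ← hs1, ← hs2, ← hcdef, ← hqdef] at h
    linarith [h, hc.ge, hc.le]
  have hformula : ∀ ε : ℝ, 0 < ε →
      ip d t Vf n ((idE d - EE d t) ∘ₗ Reps d ε) ((idE d - EE d t) ∘ₗ Reps d ε)
        = a - ε*(2*a + q*(s1+s2))/(1+ε)^2 := by
    intro ε hε
    have h1 : (1+ε) ≠ 0 := by positivity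
    have hk : (-(ε*q))^2 = ε^2 := by
      rw [neg_sq, mul_pow, sq q, hq2, mul_one]
    rw [ip_TReps d n t Vf ε, ← ha, ← hs1, ← hs2, ← hcdef, ← hqdef, hk, hc]
    field_simp
    ring
  have hI : ip d t Vf n ((idE d - EE d t) ∘ₗ idE d) ((idE d - EE d t) ∘ₗ idE d) = a :=
    ip_Tid d n t Vf
  constructor
  · intro ε hε
    rw [hformula ε hε, hI]
    have : 0 ≤ ε*(2*a + q*(s1+s2))/(1+ε)^2 :=
      div_nonneg (mul_nonneg hε.le hQ) (sq_nonneg _)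
    linarith
  · intro ε hε
    rw [hformula ε hε, hformula 1 one_pos, hI]
    have key : ε*(2*a + q*(s1+s2))/(1+ε)^2 ≤ 1*(2*a + q*(s1+s2))/(1+1)^2 := by
      rw [div_le_div_iff₀ (by positivity) (by norm_num)]
      nlinarith [sq_nonneg (1-ε), hQ, hε.le]
    linarith [key]
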